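/- Let m1 and m2 be odd positive integers. If there exist a PDM(3, m1), a PDM(3, 2m1+1), and an SIPDM(3, m2, 1), then there exists a PDM(3, m) with m = m1(m2+1) + 1. Moreover, if in addition there exists an SIPDM(3, 2m1+1, 1), then there exists an SIPDM(3, m, 1). -/

import Mathlib

/-- For odd `m = 2r+1`, the set `I_m = {-r, …, r}`. -/
noncomputable def Iset (m : ℕ) : Finset ℤ := Finset.Icc (-(((m : ℤ) - 1) / 2)) (((m : ℤ) - 1) / 2)

/-- `f` comprises all elements of `S` exactly once (entries from `S`,
each element of `S` appearing exactly once). -/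
def rowPerfect {ι : Type*} (S : Finset ℤ) (f : ι → ℤ) : Prop :=
  (∀ j, f j ∈ S) ∧ ∀ z ∈ S, ∃! j, f j = z

/-- `D` is a perfect difference matrix based on the set `S`: every row
comprises all elements of `S` exactly once, and the componentwise differences
of any two distinct rows comprise all elements of `S` exactly once. -/
def IsPDMOn {n : ℕ} {ι : Type*} (S : Finset ℤ) (D : Fin n → ι → ℤ) : Prop :=
  (∀ i, rowPerfect S (D i)) ∧
  ∀ s t : Fin n, s < t → rowPerfect S (fun j => D t j - D s j)

/-- There exists a `PDM(n,m)`. -/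
def PDMexists (n m : ℕ) : Prop := ∃ D : Fin n → Fin m → ℤ, IsPDMOn (Iset m) D

/-- There exists an `SIPDM(n,m,1)` (standard incomplete PDM with hole `{0}`). -/
def SIPDMexists (n m : ℕ) : Prop :=
  ∃ D : Fin n → Fin (m - 1) → ℤ, IsPDMOn (Iset m \ {0}) D

/-- Directed list of differences of a block, as a multiset. -/
def deltaB (B : Finset ℤ) : Multiset ℤ :=
  ((B ×ˢ B).filter (fun p => p.2 < p.1)).val.map (fun p => p.1 - p.2)

/-- Directed list of differences of a family of blocks. -/
def deltaFam {t : ℕ} (B : Fin t → Finset ℤ) : Multiset ℤ :=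
  (Finset.univ.val : Multiset (Fin t)).bind (fun i => deltaB (B i))

/-- A `(v,4,1)`-PDP with `t` blocks covering `H ⊆ [1,(v-1)/2]`: the directed
differences of the blocks cover each element of `H` exactly once and nothing else. -/
def IsPDP4 (v t : ℕ) (B : Fin t → Finset ℤ) (H : Finset ℤ) : Prop :=
  (∀ i, (B i).card = 4) ∧ H ⊆ Finset.Icc 1 (((v : ℤ) - 1) / 2) ∧ deltaFam B = H.val

/- ===================== auxiliary lemmas ===================== -/

lemma Iset_odd (n : ℕ) : Iset (2 * n + 1) = Finset.Icc (-(n : ℤ)) (n : ℤ) := by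
  have h : (((2 * n + 1 : ℕ) : ℤ) - 1) / 2 = (n : ℤ) := by push_cast; omega
  rw [Iset, h]

lemma small_mult_eq_zero {B K c : ℤ} (hB : 0 ≤ B) (hK : B < K)
    (h1 : -B ≤ K * c) (h2 : K * c ≤ B) : c = 0 := by
  rcases lt_trichotomy c 0 with h | h | h
  · exfalso
    have hc : c ≤ -1 := by omega
    have := mul_le_mul_of_nonneg_left hc (by linarith : (0:ℤ) ≤ K)
    nlinarith
  · exact h
  · exfalso
    have hc : 1 ≤ c := h
    have := mul_le_mul_of_nonneg_left hc (by linarith : (0:ℤ) ≤ K)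
    nlinarith

lemma key_rowPerfect {ι₁ ι₂ ι₃ : Type*} (R1 T : ℤ) (hR1 : 0 ≤ R1) (hT : 0 ≤ T)
    (U : Finset ℤ) (hU : U ⊆ {0})
    {f : ι₁ → ℤ} {g : ι₂ → ℤ} {h : ι₃ → ℤ}
    (hf : rowPerfect (Finset.Icc (-T) T \ {0}) f)
    (hg : rowPerfect (Finset.Icc (-R1) R1) g)
    (hh : rowPerfect (Finset.Icc (-(2*R1+1)) (2*R1+1) \ U) h) :
    rowPerfect (Finset.Icc (-((2*R1+1)*(T+1))) ((2*R1+1)*(T+1)) \ U)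
      (Sum.elim (fun p : ι₁ × ι₂ => 2*(T+1) * g p.2 + f p.1) (fun l => (T+1) * h l)) := by
  have hK : (0:ℤ) < T + 1 := by linarith
  -- facts about f and g values
  have hfmem : ∀ j, -T ≤ f j ∧ f j ≤ T ∧ f j ≠ 0 := by
    intro j
    have := hf.1 j
    rw [Finset.mem_sdiff, Finset.mem_Icc, Finset.mem_singleton] at this
    exact ⟨this.1.1, this.1.2, this.2⟩
  have hgmem : ∀ l, -R1 ≤ g l ∧ g l ≤ R1 := by
    intro l
    have := hg.1 l
    rw [Finset.mem_Icc] at this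
    exact this
  have hhmem : ∀ l, (-(2*R1+1) ≤ h l ∧ h l ≤ 2*R1+1) ∧ h l ∉ U := by
    intro l
    have := hh.1 l
    rw [Finset.mem_sdiff, Finset.mem_Icc] at this
    exact this
  -- main values are never multiples of (T+1) shifted: key exclusion
  have main_not_dvd : ∀ (j : ι₁) (l : ι₂), ¬ (T+1) ∣ (2*(T+1) * g l + f j) := by
    intro j l hdvd
    obtain ⟨c, hc⟩ := hdvd
    obtain ⟨h1, h2, h3⟩ := hfmem j
    have hc' : (T+1) * (c - 2 * g l) = f j := by linear_combination -hc
    have : c - 2 * g l = 0 :=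
      small_mult_eq_zero (B := T) (K := T+1) hT (by linarith) (by rw [hc']; exact h1)
        (by rw [hc']; exact h2)
    rw [this, mul_zero] at hc'
    exact h3 hc'.symm
  constructor
  · rintro (⟨j, l⟩ | l)
    · obtain ⟨h1, h2, h3⟩ := hfmem j
      obtain ⟨h4, h5⟩ := hgmem l
      rw [Sum.elim_inl, Finset.mem_sdiff, Finset.mem_Icc]
      refine ⟨⟨by nlinarith, by nlinarith⟩, ?_⟩
      intro hmem
      have h0 : 2*(T+1) * g l + f j = 0 := Finset.mem_singleton.mp (hU hmem)
      exact main_not_dvd j l ⟨0, by linarith⟩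
    · obtain ⟨⟨h1, h2⟩, h3⟩ := hhmem l
      rw [Sum.elim_inr, Finset.mem_sdiff, Finset.mem_Icc]
      refine ⟨⟨by nlinarith, by nlinarith⟩, ?_⟩
      intro hmem
      have h0 : (T+1) * h l = 0 := Finset.mem_singleton.mp (hU hmem)
      have hl0 : h l = 0 := by
        rcases mul_eq_zero.mp h0 with h' | h'
        · exact absurd h' (by linarith)
        · exact h'
      rw [hl0] at h3
      exact h3 (by rwa [hl0, mul_zero] at hmem)
  · intro z hz
    rw [Finset.mem_sdiff, Finset.mem_Icc] at hz
    obtain ⟨⟨hz1, hz2⟩, hzU⟩ := hz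
    by_cases hdvd : (T+1) ∣ z
    · -- hole part
      obtain ⟨e, he⟩ := hdvd
      have he1 : -(2*R1+1) ≤ e := by
        have h' : (T+1) * (-(2*R1+1)) ≤ (T+1) * e := by nlinarith
        exact le_of_mul_le_mul_left h' hK
      have he2 : e ≤ 2*R1+1 := by
        have h' : (T+1) * e ≤ (T+1) * (2*R1+1) := by nlinarith
        exact le_of_mul_le_mul_left h' hK
      have heU : e ∉ U := by
        intro hmem
        have : e = 0 := Finset.mem_singleton.mp (hU hmem)
        rw [this, mul_zero] at he
        rw [he] at hzU
        rw [this] at hmem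
        exact hzU hmem
      obtain ⟨l, hl, hlu⟩ := hh.2 e (by rw [Finset.mem_sdiff, Finset.mem_Icc]; exact ⟨⟨he1, he2⟩, heU⟩)
      refine ⟨Sum.inr l, ?_, ?_⟩
      · show (T+1) * h l = z
        rw [hl, he]
      · rintro (⟨j', l'⟩ | l') hy
        · exfalso
          simp only [Sum.elim_inl] at hy
          exact main_not_dvd j' l' (by rw [hy, he]; exact ⟨e, rfl⟩)
        · simp only [Sum.elim_inr] at hy
          have : h l' = e := by
            have h' : (T+1) * h l' = (T+1) * e := by rw [hy, he]
            exact mul_left_cancel₀ (by linarith) h'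
          rw [hlu l' this]
    · -- main part
      have h2K : (0:ℤ) < 2*(T+1) := by linarith
      set a0 := z % (2*(T+1)) with ha0def
      have ha0 : 0 ≤ a0 := Int.emod_nonneg z (by linarith)
      have ha0' : a0 < 2*(T+1) := Int.emod_lt_of_pos z h2K
      set q := z / (2*(T+1)) with hqdef
      have hzq : 2*(T+1) * q + a0 = z := Int.mul_ediv_add_emod z (2*(T+1))
      have ha0ne : a0 ≠ 0 := by
        intro h0
        rw [h0, add_zero] at hzq
        exact hdvd ⟨2*q, by linarith⟩
      have ha0neK : a0 ≠ T + 1 := by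
        intro h0
        rw [h0] at hzq
        exact hdvd ⟨2*q + 1, by linarith⟩
      set a := if a0 ≤ T then a0 else a0 - 2*(T+1) with hadef
      set d := if a0 ≤ T then q else q + 1 with hddef
      have hza : 2*(T+1) * d + a = z := by
        rw [hadef, hddef]
        split_ifs with hcase
        · exact hzq
        · ring_nf
          ring_nf at hzq
          linarith
      have hab : -T ≤ a ∧ a ≤ T ∧ a ≠ 0 := by
        rw [hadef]
        split_ifs with hcase
        · exact ⟨by linarith, hcase, ha0ne⟩
        · constructor
          · omega
          · constructor
            · omega
            · omega
      have hdb : -R1 ≤ d ∧ d ≤ R1 := by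
        obtain ⟨h1, h2, _⟩ := hab
        constructor
        · have h' : (2*(T+1)) * (-(R1+1)) < (2*(T+1)) * d := by nlinarith
          have := lt_of_mul_lt_mul_left h' (by linarith : (0:ℤ) ≤ 2*(T+1))
          omega
        · have h' : (2*(T+1)) * d < (2*(T+1)) * (R1+1) := by nlinarith
          have := lt_of_mul_lt_mul_left h' (by linarith : (0:ℤ) ≤ 2*(T+1))
          omega
      obtain ⟨j, hj, hju⟩ := hf.2 a (by
        rw [Finset.mem_sdiff, Finset.mem_Icc, Finset.mem_singleton]
        exact ⟨⟨hab.1, hab.2.1⟩, hab.2.2⟩)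
      obtain ⟨l, hl, hlu⟩ := hg.2 d (by rw [Finset.mem_Icc]; exact hdb)
      refine ⟨Sum.inl (j, l), ?_, ?_⟩
      · show 2*(T+1) * g l + f j = z
        rw [hj, hl]
        exact hza
      · rintro (⟨j', l'⟩ | l') hy
        · simp only [Sum.elim_inl] at hy
          obtain ⟨hf1, hf2, _⟩ := hfmem j'
          have hc : (2*(T+1)) * (d - g l') = f j' - a := by linear_combination hza - hy
          have hc0 : d - g l' = 0 := by
            refine small_mult_eq_zero (B := 2*T) (K := 2*(T+1)) (by linarith) (by linarith) ?_ ?_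
            · rw [hc]; obtain ⟨ha1, ha2, _⟩ := hab; linarith
            · rw [hc]; obtain ⟨ha1, ha2, _⟩ := hab; linarith
          have hgl : g l' = d := by linarith [sub_eq_zero.mp hc0]
          have hfj : f j' = a := by
            have := hc
            rw [hc0, mul_zero] at this
            linarith
          rw [hju j' hfj, hlu l' hgl]
        · exfalso
          simp only [Sum.elim_inr] at hy
          exact hdvd ⟨h l', hy.symm⟩

lemma build_IsPDMOn {ι₁ ι₂ ι₃ : Type*} (R1 T : ℤ) (hR1 : 0 ≤ R1) (hT : 0 ≤ T)
    (U : Finset ℤ) (hU : U ⊆ {0})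
    {A : Fin 3 → ι₁ → ℤ} {G : Fin 3 → ι₂ → ℤ} {E : Fin 3 → ι₃ → ℤ}
    (hA : IsPDMOn (Finset.Icc (-T) T \ {0}) A)
    (hG : IsPDMOn (Finset.Icc (-R1) R1) G)
    (hE : IsPDMOn (Finset.Icc (-(2*R1+1)) (2*R1+1) \ U) E) :
    IsPDMOn (Finset.Icc (-((2*R1+1)*(T+1))) ((2*R1+1)*(T+1)) \ U)
      (fun i => Sum.elim (fun p : ι₁ × ι₂ => 2*(T+1) * G i p.2 + A i p.1)
        (fun l => (T+1) * E i l)) := by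
  constructor
  · intro i
    exact key_rowPerfect R1 T hR1 hT U hU (hA.1 i) (hG.1 i) (hE.1 i)
  · intro s t hst
    have hkey := key_rowPerfect R1 T hR1 hT U hU (hA.2 s t hst) (hG.2 s t hst) (hE.2 s t hst)
    have heq : (fun j => (Sum.elim (fun p : ι₁ × ι₂ => 2*(T+1) * G t p.2 + A t p.1)
          (fun l => (T+1) * E t l)) j
        - (Sum.elim (fun p : ι₁ × ι₂ => 2*(T+1) * G s p.2 + A s p.1)
          (fun l => (T+1) * E s l)) j)
        = Sum.elim (fun p : ι₁ × ι₂ => 2*(T+1) * ((fun j => G t j - G s j) p.2)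
            + ((fun j => A t j - A s j) p.1))
          (fun l => (T+1) * ((fun j => E t j - E s j) l)) := by
      funext x
      cases x with
      | inl p => simp only [Sum.elim_inl]; ring
      | inr l => simp only [Sum.elim_inr]; ring
    rw [heq]
    exact hkey

lemma rowPerfect_reindex {ι ι' : Type*} (e : ι' ≃ ι) {S : Finset ℤ} {f : ι → ℤ}
    (hf : rowPerfect S f) : rowPerfect S (fun x => f (e x)) := by
  refine ⟨fun j => hf.1 (e j), fun z hz => ?_⟩
  obtain ⟨j, hj, hju⟩ := hf.2 z hz
  refine ⟨e.symm j, by simp [hj], fun y hy => ?_⟩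
  have h1 : e y = j := hju (e y) hy
  have := congrArg e.symm h1
  simpa using this

lemma IsPDMOn_reindex {n : ℕ} {ι ι' : Type*} (e : ι' ≃ ι) {S : Finset ℤ}
    {D : Fin n → ι → ℤ} (hD : IsPDMOn S D) : IsPDMOn S (fun i x => D i (e x)) :=
  ⟨fun i => rowPerfect_reindex e (hD.1 i),
   fun s t hst => rowPerfect_reindex e (hD.2 s t hst)⟩

/-- Theorem 2.7.  If there exist a `PDM(3,m1)`, a `PDM(3,2m1+1)`
and an `SIPDM(3,m2,1)`, then there exists a `PDM(3, m1(m2+1)+1)`; if moreover an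
`SIPDM(3,2m1+1,1)` exists, then an `SIPDM(3, m1(m2+1)+1, 1)` exists. -/
theorem stmt6 (m1 m2 : ℕ) (hm1 : Odd m1) (hm1pos : 0 < m1)
    (hm2 : Odd m2) (hm2pos : 0 < m2)
    (h1 : PDMexists 3 m1) (h2 : PDMexists 3 (2 * m1 + 1)) (h3 : SIPDMexists 3 m2) :
    PDMexists 3 (m1 * (m2 + 1) + 1) ∧
    (SIPDMexists 3 (2 * m1 + 1) → SIPDMexists 3 (m1 * (m2 + 1) + 1)) := by
  obtain ⟨r1, hr1⟩ := hm1
  obtain ⟨t, ht⟩ := hm2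
  obtain ⟨G, hG⟩ := h1
  obtain ⟨E, hE⟩ := h2
  obtain ⟨A, hA⟩ := h3
  -- rewrite the index sets
  have hm1e : m1 = 2 * r1 + 1 := hr1
  have hm2e : m2 = 2 * t + 1 := ht
  have hsetG : Iset m1 = Finset.Icc (-(r1 : ℤ)) (r1 : ℤ) := by
    rw [hm1e, Iset_odd]
  have hsetA : Iset m2 = Finset.Icc (-(t : ℤ)) (t : ℤ) := by
    rw [hm2e, Iset_odd]
  have hsetE : Iset (2 * m1 + 1) = Finset.Icc (-(2*(r1:ℤ)+1)) (2*(r1:ℤ)+1) := by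
    rw [show 2 * m1 + 1 = 2 * (2 * r1 + 1) + 1 by omega, Iset_odd]
    congr 1 <;> push_cast <;> ring
  have hsetM : Iset (m1 * (m2 + 1) + 1)
      = Finset.Icc (-((2*(r1:ℤ)+1)*((t:ℤ)+1))) ((2*(r1:ℤ)+1)*((t:ℤ)+1)) := by
    rw [show m1 * (m2 + 1) + 1 = 2 * ((2 * r1 + 1) * (t + 1)) + 1 by
      rw [hm1e, hm2e]; ring, Iset_odd]
    congr 1 <;> push_cast <;> ring
  rw [hsetG] at hG
  rw [hsetA] at hA
  rw [hsetE] at hE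
  have hR1 : (0:ℤ) ≤ (r1:ℤ) := Int.natCast_nonneg r1
  have hT : (0:ℤ) ≤ (t:ℤ) := Int.natCast_nonneg t
  constructor
  · -- PDM part : U = ∅
    have hE' : IsPDMOn (Finset.Icc (-(2*(r1:ℤ)+1)) (2*(r1:ℤ)+1) \ (∅ : Finset ℤ)) E := by
      rwa [Finset.sdiff_empty]
    have hbuild := build_IsPDMOn (r1:ℤ) (t:ℤ) hR1 hT ∅ (Finset.empty_subset _) hA hG hE'
    rw [Finset.sdiff_empty] at hbuild
    have hcard : Fintype.card (Fin (m1 * (m2 + 1) + 1))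
        = Fintype.card ((Fin (m2 - 1) × Fin m1) ⊕ Fin (2 * m1 + 1)) := by
      simp only [Fintype.card_fin, Fintype.card_sum, Fintype.card_prod]
      rw [hm1e, hm2e]
      rw [show 2 * t + 1 - 1 = 2 * t by omega]
      ring
    let e := Fintype.equivOfCardEq hcard
    refine ⟨fun i x => (Sum.elim (fun p : Fin (m2-1) × Fin m1 => 2*((t:ℤ)+1) * G i p.2 + A i p.1)
      (fun l => ((t:ℤ)+1) * E i l)) (e x), ?_⟩
    rw [hsetM]
    exact IsPDMOn_reindex e hbuild
  · -- SIPDM part : U = {0}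
    intro h4
    obtain ⟨E2, hE2⟩ := h4
    rw [hsetE] at hE2
    have hbuild := build_IsPDMOn (r1:ℤ) (t:ℤ) hR1 hT {0} (le_refl _) hA hG hE2
    have hcard : Fintype.card (Fin (m1 * (m2 + 1) + 1 - 1))
        = Fintype.card ((Fin (m2 - 1) × Fin m1) ⊕ Fin (2 * m1 + 1 - 1)) := by
      simp only [Fintype.card_fin, Fintype.card_sum, Fintype.card_prod]
      rw [hm1e, hm2e]
      rw [show 2 * t + 1 - 1 = 2 * t by omega]
      rw [show 2 * (2 * r1 + 1) + 1 - 1 = 2 * (2 * r1 + 1) by omega]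
      rw [show (2 * r1 + 1) * (2 * t + 1 + 1) + 1 - 1 = (2 * r1 + 1) * (2 * t + 1 + 1) by omega]
      ring
    let e := Fintype.equivOfCardEq hcard
    refine ⟨fun i x => (Sum.elim (fun p : Fin (m2-1) × Fin m1 => 2*((t:ℤ)+1) * G i p.2 + A i p.1)
      (fun l => ((t:ℤ)+1) * E2 i l)) (e x), ?_⟩
    rw [hsetM]
    exact IsPDMOn_reindex e hbuild
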